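/- Let n > 1 and k = n² − n + 1. For any two families A and B of k cable cars each on n² stations (cars are pairs (i,j), i < j, with distinct starts, distinct ends, and monotone within each family), there exist two stations linked by both A and B. -/
import Mathlib


def ValidFamily (N : ℕ) (F : Finset (ℕ × ℕ)) : Prop :=
  (∀ p ∈ F, p.1 < p.2 ∧ p.2 < N) ∧
  (∀ p ∈ F, ∀ q ∈ F, p.1 = q.1 → p = q) ∧
  (∀ p ∈ F, ∀ q ∈ F, p.2 = q.2 → p = q) ∧
  (∀ p ∈ F, ∀ q ∈ F, p.1 < q.1 → p.2 < q.2)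

def Linked (F : Finset (ℕ × ℕ)) (x y : ℕ) : Prop :=
  Relation.TransGen (fun a b => (a, b) ∈ F) x y

open Classical in
/-- Follow the (unique) incoming edge downwards, with fuel. -/
noncomputable def rootAux (F : Finset (ℕ × ℕ)) : ℕ → ℕ → ℕ
  | 0, x => x
  | fuel + 1, x =>
      if h : ∃ p, p ∈ F ∧ p.2 = x ∧ p.1 < x then
        rootAux F fuel h.choose.1
      else x

noncomputable def root (F : Finset (ℕ × ℕ)) (x : ℕ) : ℕ := rootAux F x x

lemma rootAux_reaches (F : Finset (ℕ × ℕ)) :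
    ∀ fuel x, x ≤ fuel →
      Relation.ReflTransGen (fun a b => (a, b) ∈ F) (rootAux F fuel x) x := by
  intro fuel
  induction fuel with
  | zero => intro x hx; interval_cases x; exact .refl
  | succ fuel ih =>
    intro x hx
    rw [rootAux]
    split_ifs with h
    · obtain ⟨hmem, h2, h1⟩ := h.choose_spec
      have := ih h.choose.1 (by omega)
      refine this.tail ?_
      have heq : (h.choose.1, x) = h.choose := Prod.ext_iff.mpr ⟨rfl, h2.symm⟩
      rw [heq]; exact hmem
    · exact .refl

lemma rootAux_noPred (F : Finset (ℕ × ℕ)) :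
    ∀ fuel x, x ≤ fuel →
      ¬ ∃ p, p ∈ F ∧ p.2 = rootAux F fuel x ∧ p.1 < rootAux F fuel x := by
  intro fuel
  induction fuel with
  | zero =>
    intro x hx; interval_cases x
    rintro ⟨p, _, h2, h1⟩
    simp [rootAux] at h1
  | succ fuel ih =>
    intro x hx
    rw [rootAux]
    split_ifs with h
    · obtain ⟨hmem, h2, h1⟩ := h.choose_spec
      exact ih h.choose.1 (by omega)
    · exact h

lemma le_of_rtg {F : Finset (ℕ × ℕ)} (hF : ∀ p ∈ F, p.1 < p.2) {a b : ℕ}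
    (h : Relation.ReflTransGen (fun a b => (a, b) ∈ F) a b) : a ≤ b := by
  induction h with
  | refl => exact le_refl _
  | tail _ hbc ih => exact le_trans ih (le_of_lt (hF _ hbc))

lemma right_unique_of_valid {N : ℕ} {F : Finset (ℕ × ℕ)} (hF : ValidFamily N F) :
    Relator.RightUnique (fun a b => (a, b) ∈ F) := by
  intro a b c hb hc
  have := hF.2.1 (a, b) hb (a, c) hc rfl
  exact (Prod.ext_iff.mp this).2

lemma linked_of_root_eq {N : ℕ} {F : Finset (ℕ × ℕ)} (hF : ValidFamily N F)
    {x y : ℕ} (hxy : x < y) (hr : root F x = root F y) : Linked F x y := by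
  have hx := rootAux_reaches F x x le_rfl
  have hy := rootAux_reaches F y y le_rfl
  rw [show rootAux F x x = root F x from rfl, hr] at hx
  have := Relation.ReflTransGen.total_of_right_unique
    (right_unique_of_valid hF) hx hy
  rcases this with h | h
  · rcases Relation.reflTransGen_iff_eq_or_transGen.mp h with rfl | h
    · omega
    · exact h
  · have := le_of_rtg (fun p hp => (hF.1 p hp).1) h
    omega

lemma root_mem {N : ℕ} {F : Finset (ℕ × ℕ)} (hF : ValidFamily N F)
    {x : ℕ} (hx : x < N) : root F x ∈ Finset.range N \ F.image Prod.snd := by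
  have hle : root F x ≤ x :=
    le_of_rtg (fun p hp => (hF.1 p hp).1) (rootAux_reaches F x x le_rfl)
  rw [Finset.mem_sdiff, Finset.mem_range]
  refine ⟨by omega, ?_⟩
  rw [Finset.mem_image]
  rintro ⟨p, hp, h2⟩
  have h2' : p.2 = rootAux F x x := by simpa [root] using h2
  exact rootAux_noPred F x x le_rfl ⟨p, hp, h2', by
    have := (hF.1 p hp).1; omega⟩

theorem stmt_8 (n : ℕ) (hn : 1 < n) (A B : Finset (ℕ × ℕ))
    (hA : ValidFamily (n^2) A) (hB : ValidFamily (n^2) B)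
    (hAcard : A.card = n^2 - n + 1) (hBcard : B.card = n^2 - n + 1) :
    ∃ x y : ℕ, x < y ∧ Linked A x y ∧ Linked B x y := by
  have hn2 : n ≤ n ^ 2 := Nat.le_self_pow (by norm_num) n
  set N := n ^ 2 with hN
  set RA := Finset.range N \ A.image Prod.snd with hRA
  set RB := Finset.range N \ B.image Prod.snd with hRB
  have cardA : (A.image Prod.snd).card = A.card :=
    Finset.card_image_of_injOn (fun p hp q hq h => hA.2.2.1 p hp q hq h)
  have cardB : (B.image Prod.snd).card = B.card :=
    Finset.card_image_of_injOn (fun p hp q hq h => hB.2.2.1 p hp q hq h)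
  have subA : A.image Prod.snd ⊆ Finset.range N := by
    intro a ha
    rw [Finset.mem_image] at ha
    obtain ⟨p, hp, rfl⟩ := ha
    exact Finset.mem_range.mpr (hA.1 p hp).2
  have subB : B.image Prod.snd ⊆ Finset.range N := by
    intro a ha
    rw [Finset.mem_image] at ha
    obtain ⟨p, hp, rfl⟩ := ha
    exact Finset.mem_range.mpr (hB.1 p hp).2
  have cardRA : RA.card = n - 1 := by
    rw [hRA, Finset.card_sdiff_of_subset subA, Finset.card_range, cardA, hAcard]; omega
  have cardRB : RB.card = n - 1 := by
    rw [hRB, Finset.card_sdiff_of_subset subB, Finset.card_range, cardB, hBcard]; omega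
  -- pigeonhole
  have hmaps : ∀ x ∈ Finset.range N, (root A x, root B x) ∈ RA ×ˢ RB := by
    intro x hx
    rw [Finset.mem_product]
    exact ⟨root_mem hA (Finset.mem_range.mp hx), root_mem hB (Finset.mem_range.mp hx)⟩
  have hlt : (RA ×ˢ RB).card < (Finset.range N).card := by
    rw [Finset.card_product, cardRA, cardRB, Finset.card_range, hN]
    have : (n - 1) * (n - 1) < n * n := by
      apply Nat.mul_lt_mul_of_lt_of_le <;> omega
    calc (n-1) * (n-1) < n * n := this
      _ = n ^ 2 := (sq n).symm
  obtain ⟨x, hx, y, hy, hne, heq⟩ :=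
    Finset.exists_ne_map_eq_of_card_lt_of_maps_to hlt hmaps
  have heq1 : root A x = root A y := congrArg Prod.fst heq
  have heq2 : root B x = root B y := congrArg Prod.snd heq
  rcases Nat.lt_or_ge x y with h | h
  · exact ⟨x, y, h, linked_of_root_eq hA h heq1, linked_of_root_eq hB h heq2⟩
  · have h' : y < x := by omega
    exact ⟨y, x, h', linked_of_root_eq hA h' heq1.symm, linked_of_root_eq hB h' heq2.symm⟩
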